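/- Let k be a number field, n ≥ 2 an integer, N a finite set of k-rational points of ℙⁿ, and S a finite set of places of k containing all the infinite places. Then there exist non-negative real numbers n_v, one for each place v of k not in S, with n_v = 0 for all but finitely many such places, such that the following set is Zariski dense in ℙⁿ: the set of points Q = [1 : a₁ : … : a_n] ∈ ℙⁿ(k) with Q ∉ N satisfying, for every place v ∉ S: max(1, |a₁|_v, …, |a_n|_v) ≤ exp(n_v) and λ_{d,v}(Q) ≤ n_v for every d ∈ N. (This is the instance X = ℙⁿ, with D the union of the hyperplane {x₀ = 0} and the finite set N, of the theorem on Zariski density of (D,S)-integral points on varieties whose generic linear section is a rational curve, when the codimension-one part of D has degree one; since N consists of k-rational points no finite extension of k is needed.) -/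

import Mathlib

open NumberField IsDedekindDomain

/-- The finite places of a number field `K`: the nonzero prime ideals of its ring of
integers. -/
abbrev FinPlace (K : Type) [Field K] [NumberField K] := HeightOneSpectrum (𝓞 K)

/-- The places of a number field `K`: either a finite place or an infinite place (the
latter arising from an embedding of `K` into `ℂ`). -/
abbrev Place (K : Type) [Field K] [NumberField K] :=
  FinPlace K ⊕ NumberField.InfinitePlace K

/-- The normalized `v`-adic absolute value attached to a finite place `v` of `K`:
`|x|_v = (N 𝔭)^(-ord_v x)` where `N 𝔭` is the absolute norm of the prime ideal. -/
noncomputable def finAbs {K : Type} [Field K] [NumberField K] (v : FinPlace K) (x : K) : ℝ :=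
  (WithZeroMulInt.toNNReal (e := (Ideal.absNorm v.asIdeal : NNReal))
    (by
      refine Nat.cast_ne_zero (R := NNReal) |>.mpr ?_
      simpa [Ideal.absNorm_eq_zero_iff] using v.ne_bot)
    (v.valuation K x) : ℝ)

/-- The absolute value `|·|_v` attached to a place `v` of `K`: the normalized `𝔭`-adic
absolute value at a finite place, and the absolute value induced by the corresponding
embedding at an infinite place. -/
noncomputable def placeAbs {K : Type} [Field K] [NumberField K] : Place K → K → ℝ
  | .inl v => finAbs v
  | .inr w => fun x => w x

/-- `‖q‖_v = max (|q₀|_v, …, |q_n|_v)`: the `v`-adic sup norm of a coordinate vector. -/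
noncomputable def projNorm {K : Type} [Field K] [NumberField K] {n : ℕ} (v : Place K)
    (q : Fin (n + 1) → K) : ℝ :=
  ⨆ i, placeAbs v (q i)

/-- `δ_v(d, q) = max_{0 ≤ i < j ≤ n} |dᵢ qⱼ − dⱼ qᵢ|_v`, written as the maximum over all
pairs `(i, j)`, which agrees with the maximum over `i < j` since the quantity is symmetric
under swapping `i` and `j` and vanishes (hence does not contribute) for `i = j`. -/
noncomputable def projDelta {K : Type} [Field K] [NumberField K] {n : ℕ} (v : Place K)
    (d q : Fin (n + 1) → K) : ℝ :=
  ⨆ p : Fin (n + 1) × Fin (n + 1), placeAbs v (d p.1 * q p.2 - d p.2 * q p.1)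

/-- The standard Weil function `λ_{d,v}(Q) = log (‖d‖_v · ‖Q‖_v / δ_v(d, Q))` of the point
`d` at the place `v`, computed using the canonical representatives (mathematically it is
independent of the choice of homogeneous coordinates). -/
noncomputable def weil {K : Type} [Field K] [NumberField K] {n : ℕ} (v : Place K)
    (d Q : Projectivization K (Fin (n + 1) → K)) : ℝ :=
  Real.log (projNorm v d.rep * projNorm v Q.rep / projDelta v d.rep Q.rep)

namespace Aux11

variable {K : Type} [Field K] [NumberField K]

lemma one_lt_e (v : FinPlace K) : 1 < (Ideal.absNorm v.asIdeal : NNReal) := by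
  have h0 : Ideal.absNorm v.asIdeal ≠ 0 := by
    simpa [Ideal.absNorm_eq_zero_iff] using v.ne_bot
  have h1 : Ideal.absNorm v.asIdeal ≠ 1 := by
    rw [Ne, Ideal.absNorm_eq_one_iff]
    exact v.isPrime.ne_top
  have : 1 < Ideal.absNorm v.asIdeal := by omega
  exact_mod_cast this

lemma finAbs_nonneg (v : FinPlace K) (x : K) : 0 ≤ finAbs v x := NNReal.coe_nonneg _

lemma finAbs_mul (v : FinPlace K) (x y : K) :
    finAbs v (x * y) = finAbs v x * finAbs v y := by
  unfold finAbs
  rw [map_mul, map_mul, NNReal.coe_mul]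

lemma finAbs_one (v : FinPlace K) : finAbs v (1 : K) = 1 := by
  unfold finAbs
  rw [map_one, map_one, NNReal.coe_one]

lemma finAbs_eq_zero_iff (v : FinPlace K) (x : K) : finAbs v x = 0 ↔ x = 0 := by
  unfold finAbs
  rw [NNReal.coe_eq_zero, map_eq_zero, Valuation.zero_iff]

lemma finAbs_pos (v : FinPlace K) {x : K} (hx : x ≠ 0) : 0 < finAbs v x :=
  lt_of_le_of_ne (finAbs_nonneg v x) (fun h => hx ((finAbs_eq_zero_iff v x).mp h.symm))

lemma finAbs_le_one (v : FinPlace K) (x : 𝓞 K) :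
    finAbs v (algebraMap (𝓞 K) K x) ≤ 1 := by
  unfold finAbs
  have h := v.valuation_le_one (K := K) x
  have hmono := (WithZeroMulInt.toNNReal_strictMono (one_lt_e v)).monotone h
  rw [map_one] at hmono
  exact_mod_cast hmono

lemma finAbs_sub_le_max (v : FinPlace K) (x y : K) :
    finAbs v (x - y) ≤ max (finAbs v x) (finAbs v y) := by
  unfold finAbs
  have h : v.valuation K (x - y) ≤ max (v.valuation K x) (v.valuation K y) := by
    simpa using Valuation.map_sub (v.valuation K) x y
  have hmono := (WithZeroMulInt.toNNReal_strictMono (one_lt_e v)).monotone h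
  rw [Monotone.map_max (WithZeroMulInt.toNNReal_strictMono (one_lt_e v)).monotone] at hmono
  have := NNReal.coe_le_coe.mpr hmono
  simpa using this

lemma finAbs_lt_one (v : FinPlace K) {x : 𝓞 K} (hne : finAbs v (algebraMap (𝓞 K) K x) ≠ 1) :
    v.valuation K (algebraMap (𝓞 K) K x) < 1 := by
  rcases lt_or_eq_of_le (v.valuation_le_one (K := K) x) with h | h
  · exact h
  · exfalso
    apply hne
    unfold finAbs
    rw [h, map_one, NNReal.coe_one]

lemma finite_finAbs_ne_one (x : 𝓞 K) (hx : x ≠ 0) :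
    {v : FinPlace K | finAbs v (algebraMap (𝓞 K) K x) ≠ 1}.Finite := by
  have hI : (Ideal.span {x} : Ideal (𝓞 K)) ≠ 0 := by
    simpa [Ideal.span_singleton_eq_bot] using hx
  refine Set.Finite.subset (Ideal.finite_factors hI) ?_
  intro v hv
  have := finAbs_lt_one v hv
  rw [HeightOneSpectrum.valuation_lt_one_iff_dvd (K := K) v x] at this
  exact this

lemma placeAbs_inl (v : FinPlace K) (x : K) : placeAbs (Sum.inl v) x = finAbs v x := rfl

variable {n : ℕ}

lemma projNorm_smul (v : FinPlace K) (c : K) (q : Fin (n + 1) → K) :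
    projNorm (Sum.inl v) (c • q) = finAbs v c * projNorm (Sum.inl v) q := by
  unfold projNorm
  rw [Real.mul_iSup_of_nonneg (finAbs_nonneg v c)]
  refine iSup_congr fun i => ?_
  rw [placeAbs_inl, placeAbs_inl, Pi.smul_apply, smul_eq_mul, finAbs_mul]

lemma projDelta_smul_right (v : FinPlace K) (c : K) (d q : Fin (n + 1) → K) :
    projDelta (Sum.inl v) d (c • q) = finAbs v c * projDelta (Sum.inl v) d q := by
  unfold projDelta
  rw [Real.mul_iSup_of_nonneg (finAbs_nonneg v c)]
  refine iSup_congr fun p => ?_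
  rw [placeAbs_inl, placeAbs_inl, Pi.smul_apply, Pi.smul_apply, smul_eq_mul, smul_eq_mul,
    ← finAbs_mul]
  congr 1
  ring

lemma projDelta_smul_left (v : FinPlace K) (c : K) (d q : Fin (n + 1) → K) :
    projDelta (Sum.inl v) (c • d) q = finAbs v c * projDelta (Sum.inl v) d q := by
  unfold projDelta
  rw [Real.mul_iSup_of_nonneg (finAbs_nonneg v c)]
  refine iSup_congr fun p => ?_
  rw [placeAbs_inl, placeAbs_inl, Pi.smul_apply, Pi.smul_apply, smul_eq_mul, smul_eq_mul,
    ← finAbs_mul]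
  congr 1
  ring

lemma le_projDelta (v : FinPlace K) (d q : Fin (n + 1) → K) (p : Fin (n + 1) × Fin (n + 1)) :
    finAbs v (d p.1 * q p.2 - d p.2 * q p.1) ≤ projDelta (Sum.inl v) d q := by
  unfold projDelta
  exact le_ciSup (f := fun p : Fin (n+1) × Fin (n+1) =>
    placeAbs (Sum.inl v) (d p.1 * q p.2 - d p.2 * q p.1))
    (Set.Finite.bddAbove (Set.finite_range _)) p

lemma le_projNorm (v : FinPlace K) (q : Fin (n + 1) → K) (i : Fin (n + 1)) :
    finAbs v (q i) ≤ projNorm (Sum.inl v) q := by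
  unfold projNorm
  exact le_ciSup (f := fun i => placeAbs (Sum.inl v) (q i))
    (Set.Finite.bddAbove (Set.finite_range _)) i

lemma projNorm_le_one (v : FinPlace K) {q : Fin (n + 1) → K}
    (hq : ∀ i, finAbs v (q i) ≤ 1) : projNorm (Sum.inl v) q ≤ 1 :=
  ciSup_le fun i => hq i

lemma projNorm_pos (v : FinPlace K) {q : Fin (n + 1) → K} (i : Fin (n + 1)) (hi : q i ≠ 0) :
    0 < projNorm (Sum.inl v) q :=
  lt_of_lt_of_le (finAbs_pos v hi) (le_projNorm v q i)

lemma projNorm_nonneg (v : FinPlace K) (q : Fin (n + 1) → K) :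
    0 ≤ projNorm (Sum.inl v) q :=
  le_trans (finAbs_nonneg v (q 0)) (le_projNorm v q 0)

lemma projNorm_cons_one (v : FinPlace K) {a : Fin n → K} (ha : ∀ i, finAbs v (a i) ≤ 1) :
    projNorm (Sum.inl v) (Fin.cons 1 a) = 1 := by
  refine le_antisymm (projNorm_le_one v ?_) ?_
  · intro i
    refine Fin.cases ?_ ?_ i
    · rw [Fin.cons_zero, finAbs_one]
    · intro j; rw [Fin.cons_succ]; exact ha j
  · have := le_projNorm v (Fin.cons 1 a) 0
    rwa [Fin.cons_zero, finAbs_one] at this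

instance : Infinite (𝓞 K) :=
  Infinite.of_injective (fun n : ℕ => (n : 𝓞 K)) (CharZero.cast_injective)

lemma exists_integral_eval_ne_zero {k : ℕ} (F : MvPolynomial (Fin k) K) (hF : F ≠ 0) :
    ∃ σ : Fin k → 𝓞 K,
      MvPolynomial.eval (fun i => algebraMap (𝓞 K) K (σ i)) F ≠ 0 := by
  classical
  obtain ⟨b, hb⟩ := IsLocalization.exist_integer_multiples (nonZeroDivisors (𝓞 K))
    F.support F.coeff
  set φ := algebraMap (𝓞 K) K with hφ
  have hφinj : Function.Injective φ := IsFractionRing.injective (𝓞 K) K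
  have hg : ∀ m : Fin k →₀ ℕ, ∃ y : 𝓞 K, φ y = φ (b : 𝓞 K) * F.coeff m := by
    intro m
    by_cases hm : m ∈ F.support
    · obtain ⟨y, hy⟩ := hb m hm
      exact ⟨y, by simpa [Algebra.smul_def] using hy⟩
    · exact ⟨0, by simp [MvPolynomial.notMem_support_iff.mp hm]⟩
  choose g hgspec using hg
  set F₀ : MvPolynomial (Fin k) (𝓞 K) :=
    ∑ m ∈ F.support, MvPolynomial.monomial m (g m) with hF₀
  have hmap : MvPolynomial.map φ F₀ = MvPolynomial.C (φ (b : 𝓞 K)) * F := by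
    apply MvPolynomial.ext
    intro m
    rw [MvPolynomial.coeff_map, MvPolynomial.coeff_C_mul, hF₀]
    rw [MvPolynomial.coeff_sum]
    simp only [MvPolynomial.coeff_monomial]
    rw [Finset.sum_ite_eq' F.support m g]
    by_cases hm : m ∈ F.support
    · rw [if_pos hm, hgspec]
    · rw [if_neg hm, MvPolynomial.notMem_support_iff.mp hm, map_zero, mul_zero]
  have hb0 : φ (b : 𝓞 K) ≠ 0 := by
    intro h
    exact nonZeroDivisors.coe_ne_zero b (hφinj (by rw [h, map_zero]))
  have hF₀0 : F₀ ≠ 0 := by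
    intro h
    apply hF
    have : MvPolynomial.C (φ (b : 𝓞 K)) * F = 0 := by rw [← hmap, h]; simp
    rcases mul_eq_zero.mp this with h' | h'
    · exact absurd (by simpa using h') hb0
    · exact h'
  have : ∃ σ : Fin k → 𝓞 K, MvPolynomial.eval σ F₀ ≠ 0 := by
    by_contra hcon
    push_neg at hcon
    exact hF₀0 (MvPolynomial.funext fun x => by simpa using hcon x)
  obtain ⟨σ, hσ⟩ := this
  refine ⟨σ, fun h => ?_⟩
  have key : MvPolynomial.eval (fun i => φ (σ i)) (MvPolynomial.map φ F₀)
      = φ (MvPolynomial.eval σ F₀) := by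
    rw [MvPolynomial.eval_map]
    rw [show MvPolynomial.eval σ F₀ = MvPolynomial.eval₂ (RingHom.id _) σ F₀ from rfl]
    rw [MvPolynomial.eval₂_comp_left φ (RingHom.id _) σ]
    rfl
  rw [hmap] at key
  rw [map_mul, MvPolynomial.eval_C, h, mul_zero] at key
  exact hσ (hφinj (by rw [← key, map_zero]))

lemma eval_smul_of_isHomogeneous {R : Type*} [CommRing R] {k : ℕ}
    (f : MvPolynomial (Fin k) R) {e : ℕ} (hf : f.IsHomogeneous e) (c : R) (x : Fin k → R) :
    MvPolynomial.eval (c • x) f = c ^ e * MvPolynomial.eval x f := by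
  classical
  rw [MvPolynomial.eval_eq, MvPolynomial.eval_eq, Finset.mul_sum]
  refine Finset.sum_congr rfl fun d hd => ?_
  have hdeg : d.degree = e := by
    by_contra hne
    exact MvPolynomial.mem_support_iff.mp hd (hf.coeff_eq_zero hne)
  have hprod : (∏ i ∈ d.support, (c • x) i ^ d i)
      = c ^ e * ∏ i ∈ d.support, x i ^ d i := by
    have : ∀ i ∈ d.support, (c • x) i ^ d i = c ^ d i * x i ^ d i := by
      intro i _
      rw [Pi.smul_apply, smul_eq_mul, mul_pow]
    rw [Finset.prod_congr rfl this, Finset.prod_mul_distrib, Finset.prod_pow_eq_pow_sum]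
    rw [show ∑ i ∈ d.support, d i = d.degree from rfl, hdeg]
  rw [hprod]
  ring

end Aux11

open Aux11 in
set_option maxHeartbeats 1000000 in
/-- Let `k` be a number field, `n ≥ 2`, `N` a finite set of `k`-rational
points of `ℙⁿ`, and `S` a finite set of places of `k` containing all the infinite places.
Then there exist non-negative reals `n_v`, one for each place `v ∉ S`, with `n_v = 0` for
all but finitely many such places, such that the set of points `Q = [1 : a₁ : … : a_n]`
of `ℙⁿ(k)` with `Q ∉ N` satisfying, for every place `v ∉ S`,
`max (1, |a₁|_v, …, |a_n|_v) ≤ exp n_v` and `λ_{d,v}(Q) ≤ n_v` for every `d ∈ N`, is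
Zariski dense in `ℙⁿ`; i.e., for every nonzero homogeneous polynomial `f` there is a point
`Q` of the set with `f(Q) ≠ 0`. -/
theorem dense_S_integral_points_proj_space
    (K : Type) [Field K] [NumberField K] (n : ℕ) (hn : 2 ≤ n)
    (N : Finset (Projectivization K (Fin (n + 1) → K)))
    (S : Finset (Place K)) (hS : ∀ w : NumberField.InfinitePlace K, Sum.inr w ∈ S) :
    ∃ c : Place K → ℝ, (∀ v ∉ S, 0 ≤ c v) ∧ {v : Place K | v ∉ S ∧ c v ≠ 0}.Finite ∧
      ∀ (f : MvPolynomial (Fin (n + 1)) K), f ≠ 0 → ∀ e : ℕ, f.IsHomogeneous e →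
        ∃ (Q : Projectivization K (Fin (n + 1) → K)) (a : Fin n → K)
            (ha : (Fin.cons 1 a : Fin (n + 1) → K) ≠ 0),
          Projectivization.mk K (Fin.cons 1 a) ha = Q ∧ Q ∉ N ∧
          (∀ v : Place K, v ∉ S →
            max 1 (⨆ i, placeAbs v (a i)) ≤ Real.exp (c v) ∧
            ∀ d ∈ N, weil v d Q ≤ c v) ∧
          MvPolynomial.eval Q.rep f ≠ 0 := by
  classical
  obtain ⟨m, rfl⟩ : ∃ m, n = m + 2 := ⟨n - 2, by omega⟩
  set φ : 𝓞 K →+* K := (algebraMap (𝓞 K) K : 𝓞 K →+* K) with hφdef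
  have hφinj : Function.Injective φ := IsFractionRing.injective (𝓞 K) K
  -- index facts
  have hs0 : ((0 : Fin (m + 2)).succ) = (1 : Fin (m + 2 + 1)) := rfl
  have hs1 : ((1 : Fin (m + 2)).succ) = (2 : Fin (m + 2 + 1)) := rfl
  have h01 : (0 : Fin (m + 2)) ≠ 1 := by simp [Fin.ext_iff]
  -- clear denominators of representatives
  have hden : ∀ d : {x // x ∈ N}, ∃ (b : 𝓞 K) (w : Fin (m + 2 + 1) → 𝓞 K), b ≠ 0 ∧
      ∀ i, φ (w i) = φ b * (d : Projectivization K (Fin (m + 2 + 1) → K)).rep i := by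
    intro d
    obtain ⟨b, hb⟩ := IsLocalization.exist_integer_multiples (nonZeroDivisors (𝓞 K))
      (Finset.univ) ((d : Projectivization K (Fin (m + 2 + 1) → K)).rep)
    have hex : ∀ i : Fin (m + 2 + 1), ∃ y : 𝓞 K,
        φ y = φ (b : 𝓞 K) * (d : Projectivization K (Fin (m + 2 + 1) → K)).rep i := by
      intro i
      obtain ⟨y, hy⟩ := hb i (Finset.mem_univ i)
      exact ⟨y, by simpa [Algebra.smul_def] using hy⟩
    choose w hw using hex
    exact ⟨b, w, nonZeroDivisors.coe_ne_zero b, hw⟩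
  choose b w hbne hw using hden
  have hφb : ∀ d, φ (b d) ≠ 0 := by
    intro d h
    exact hbne d (hφinj (by rw [h, map_zero]))
  -- each w d has a nonzero coordinate
  have hwnz : ∀ d : {x // x ∈ N}, ∃ i, w d i ≠ 0 := by
    intro d
    obtain ⟨i, hi⟩ := Function.ne_iff.mp
      (Projectivization.rep_nonzero (d : Projectivization K (Fin (m + 2 + 1) → K)))
    refine ⟨i, fun h => hi ?_⟩
    have := hw d i
    rw [h, map_zero] at this
    have := (mul_eq_zero.mp this.symm).resolve_left (hφb d)
    simpa using this
  choose jnz hjnz using hwnz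
  -- the set of "affine" points of N
  set Daff : Finset {x // x ∈ N} := N.attach.filter (fun d => w d 0 ≠ 0) with hDaff
  -- choose γ avoiding finitely many bad values
  have hγex : ∃ γ : 𝓞 K, ∀ d ∈ Daff, w d 2 - w d 0 * γ ≠ 0 := by
    have hfin : (⋃ d ∈ Daff, {γ : 𝓞 K | w d 2 - w d 0 * γ = 0}).Finite := by
      refine Set.Finite.biUnion Daff.finite_toSet fun d hd => ?_
      refine Set.Subsingleton.finite ?_
      intro γ₁ h₁ γ₂ h₂
      have hd0 : w d 0 ≠ 0 := (Finset.mem_filter.mp hd).2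
      have : w d 0 * γ₁ = w d 0 * γ₂ := by
        have e₁ : w d 2 = w d 0 * γ₁ := by
          have := h₁; simp only [Set.mem_setOf_eq, sub_eq_zero] at this; exact this
        have e₂ : w d 2 = w d 0 * γ₂ := by
          have := h₂; simp only [Set.mem_setOf_eq, sub_eq_zero] at this; exact this
        rw [← e₁, ← e₂]
      exact mul_left_cancel₀ hd0 this
    obtain ⟨γ, hγ⟩ := (Set.Finite.infinite_compl hfin).nonempty
    refine ⟨γ, fun d hd h => ?_⟩
    apply hγ
    exact Set.mem_biUnion hd (by simpa using h)
  obtain ⟨γ, hγ⟩ := hγex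
  -- the nonzero "resultants"
  set ρ : {x // x ∈ N} → 𝓞 K :=
    fun d => if d ∈ Daff then w d 2 - w d 0 * γ else w d (jnz d) with hρdef
  have hρ : ∀ d, ρ d ≠ 0 := by
    intro d
    by_cases hd : d ∈ Daff
    · rw [hρdef]; simpa [hd] using hγ d hd
    · rw [hρdef]; simpa [hd] using hjnz d
  -- the constants
  set c : Place K → ℝ := Sum.elim
    (fun vf => ∑ d ∈ N.attach, max 0
      (Real.log (projNorm (n := m + 2) (Sum.inl vf) (fun i => φ (w d i)))
        - Real.log (finAbs vf (φ (ρ d))))) (fun _ => 0) with hcdef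
  have hterm_nonneg : ∀ (vf : FinPlace K) (d : {x // x ∈ N}), (0:ℝ) ≤ max 0
      (Real.log (projNorm (n := m + 2) (Sum.inl vf) (fun i => φ (w d i)))
        - Real.log (finAbs vf (φ (ρ d)))) := fun _ _ => le_max_left 0 _
  refine ⟨c, ?_, ?_, ?_⟩
  · rintro (vf | vw) _
    · exact Finset.sum_nonneg fun d _ => hterm_nonneg vf d
    · exact le_refl 0
  · -- finiteness of support
    have hsub : {v : Place K | v ∉ S ∧ c v ≠ 0} ⊆
        Sum.inl '' (⋃ d : {x // x ∈ N}, {vf : FinPlace K | finAbs vf (φ (ρ d)) ≠ 1}) := by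
      rintro (vf | vw) ⟨hvS, hvc⟩
      · refine ⟨vf, ?_, rfl⟩
        simp only [Set.mem_iUnion, Set.mem_setOf_eq]
        by_contra hall
        push_neg at hall
        apply hvc
        simp only [hcdef, Sum.elim_inl]
        refine Finset.sum_eq_zero fun d _ => ?_
        have h1 : finAbs vf (φ (ρ d)) = 1 := hall d
        have hNw1 : projNorm (n := m + 2) (Sum.inl vf) (fun i => φ (w d i)) ≤ 1 :=
          projNorm_le_one vf (fun i => finAbs_le_one vf (w d i))
        have hNw0 : 0 ≤ projNorm (n := m + 2) (Sum.inl vf) (fun i => φ (w d i)) :=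
          projNorm_nonneg vf _
        have hlog : Real.log (projNorm (n := m + 2) (Sum.inl vf) (fun i => φ (w d i))) ≤ 0 :=
          Real.log_nonpos hNw0 hNw1
        rw [h1, Real.log_one]
        exact max_eq_left (by linarith)
      · exact absurd (hS vw) hvS
    refine Set.Finite.subset (Set.Finite.image _ (Set.finite_iUnion fun d => ?_)) hsub
    exact finite_finAbs_ne_one (ρ d) (hρ d)
  · -- density
    intro f hf e hfe
    -- the substitution polynomial
    set GP : MvPolynomial (Fin (m + 2)) K := ∏ d ∈ Daff,
      (MvPolynomial.C (φ (w d 0)) * MvPolynomial.X 0 - MvPolynomial.C (φ (w d 1))) with hGPdef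
    set Φ : Fin (m + 2 + 1) → MvPolynomial (Fin (m + 2)) K := Fin.cons 1
      (fun i => if i = 1 then MvPolynomial.X 1 * GP + MvPolynomial.C (φ γ)
        else MvPolynomial.X i) with hΦdef
    set F : MvPolynomial (Fin (m + 2)) K := MvPolynomial.bind₁ Φ f with hFdef
    have evalF : ∀ x : Fin (m + 2) → K, MvPolynomial.eval x F =
        MvPolynomial.eval (Fin.cons 1 (fun i => if i = 1 then
          x 1 * (∏ d ∈ Daff, (φ (w d 0) * x 0 - φ (w d 1))) + φ γ else x i)) f := by
      intro x
      have h1 : MvPolynomial.eval x F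
          = MvPolynomial.eval (fun j => MvPolynomial.eval x (Φ j)) f :=
        MvPolynomial.eval₂Hom_bind₁ (RingHom.id K) x Φ f
      rw [h1]
      have hvec : (fun j => MvPolynomial.eval x (Φ j)) = Fin.cons 1 (fun i => if i = 1 then
          x 1 * (∏ d ∈ Daff, (φ (w d 0) * x 0 - φ (w d 1))) + φ γ else x i) := by
        funext j
        refine Fin.cases ?_ ?_ j
        · simp [hΦdef]
        · intro i
          simp only [hΦdef, Fin.cons_succ]
          split_ifs with hi
          · simp only [map_add, map_mul, map_prod, map_sub, MvPolynomial.eval_X,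
              MvPolynomial.eval_C, hGPdef]
          · exact MvPolynomial.eval_X i
      rw [hvec]
    have h01P : (0 : Fin (m + 2 + 1)) ≠ 1 := by simp [Fin.ext_iff]
    have hF0 : F ≠ 0 := by
      intro hF0
      set HP : MvPolynomial (Fin (m + 2 + 1)) K := ∏ d ∈ Daff,
        (MvPolynomial.C (φ (w d 0)) * MvPolynomial.X 1
          - MvPolynomial.C (φ (w d 1)) * MvPolynomial.X 0) with hHPdef
      have hHPfac : ∀ d ∈ Daff, (MvPolynomial.C (φ (w d 0)) * MvPolynomial.X 1
          - MvPolynomial.C (φ (w d 1)) * MvPolynomial.X 0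
            : MvPolynomial (Fin (m + 2 + 1)) K) ≠ 0 := by
        intro d hd hzero
        have hd0 : w d 0 ≠ 0 := (Finset.mem_filter.mp hd).2
        have h := congrArg
          (MvPolynomial.eval (fun j : Fin (m + 2 + 1) => if j = 1 then (1:K) else 0)) hzero
        simp only [map_sub, map_mul, MvPolynomial.eval_C, MvPolynomial.eval_X, map_zero] at h
        simp only [if_true, if_neg h01P, mul_one, mul_zero, sub_zero] at h
        exact hd0 (hφinj (by rw [h, map_zero]))
      have hevalHP : ∀ z : Fin (m + 2 + 1) → K, MvPolynomial.eval z HP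
          = ∏ d ∈ Daff, (φ (w d 0) * z 1 - φ (w d 1) * z 0) := by
        intro z
        rw [hHPdef, map_prod]
        refine Finset.prod_congr rfl fun d _ => ?_
        simp only [map_sub, map_mul, MvPolynomial.eval_C, MvPolynomial.eval_X]
      have hall : ∀ z : Fin (m + 2 + 1) → K,
          MvPolynomial.eval z (f * (MvPolynomial.X 0 * HP)) = 0 := by
        intro z
        rw [map_mul, map_mul, MvPolynomial.eval_X]
        by_cases hz0 : z 0 = 0
        · rw [hz0]; ring
        by_cases hzH : MvPolynomial.eval z HP = 0
        · rw [hzH]; ring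
        suffices hsf : MvPolynomial.eval z f = 0 by rw [hsf]; ring
        set y : Fin (m + 2) → K := fun i => z i.succ / z 0 with hydef
        have hy0 : y 0 = z 1 / z 0 := by simp only [hydef]; rw [hs0]
        have hy1 : y 1 = z 2 / z 0 := by simp only [hydef]; rw [hs1]
        have hfaczero : ∀ d ∈ Daff, φ (w d 0) * z 1 - φ (w d 1) * z 0 ≠ 0 := by
          have h' : (∏ d ∈ Daff, (φ (w d 0) * z 1 - φ (w d 1) * z 0)) ≠ 0 := by
            rw [← hevalHP z]
            exact hzH
          exact Finset.prod_ne_zero_iff.mp h'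
        have hfac : ∀ d ∈ Daff, φ (w d 0) * y 0 - φ (w d 1) ≠ 0 := by
          intro d hd
          have h2 : φ (w d 0) * y 0 - φ (w d 1)
              = (φ (w d 0) * z 1 - φ (w d 1) * z 0) / z 0 := by
            rw [hy0]
            field_simp
          rw [h2]
          exact div_ne_zero (hfaczero d hd) hz0
        set gz := ∏ d ∈ Daff, (φ (w d 0) * y 0 - φ (w d 1)) with hgz
        have hgzne : gz ≠ 0 := Finset.prod_ne_zero_iff.mpr hfac
        set x : Fin (m + 2) → K := fun i => if i = 1 then (y 1 - φ γ) / gz else y i with hxdef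
        have hx0 : x 0 = y 0 := if_neg h01
        have hinner : (fun i => if i = 1 then
            x 1 * (∏ d ∈ Daff, (φ (w d 0) * x 0 - φ (w d 1))) + φ γ else x i) = y := by
          funext i
          by_cases hi : i = 1
          · subst hi
            rw [if_pos rfl]
            have hx1 : x 1 = (y 1 - φ γ) / gz := if_pos rfl
            have hprodx : (∏ d ∈ Daff, (φ (w d 0) * x 0 - φ (w d 1))) = gz := by
              rw [hgz]
              exact Finset.prod_congr rfl fun d _ => by rw [hx0]
            rw [hx1, hprodx, div_mul_cancel₀ _ hgzne, sub_add_cancel]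
          · rw [if_neg hi, hxdef]
            simp only [if_neg hi]
        have hzero1 : MvPolynomial.eval (Fin.cons 1 y) f = 0 := by
          have h := evalF x
          rw [hF0, map_zero, hinner] at h
          exact h.symm
        have hzdec : z = z 0 • (Fin.cons 1 y : Fin (m + 2 + 1) → K) := by
          funext j
          refine Fin.cases ?_ ?_ j
          · simp
          · intro i
            simp only [Pi.smul_apply, Fin.cons_succ, smul_eq_mul, hydef]
            rw [mul_div_cancel₀ _ hz0]
        rw [hzdec, eval_smul_of_isHomogeneous f hfe, hzero1, mul_zero]
      have hzero : f * (MvPolynomial.X 0 * HP) = 0 :=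
        MvPolynomial.funext fun z => by rw [hall z]; simp
      have hXne : (MvPolynomial.X 0 : MvPolynomial (Fin (m + 2 + 1)) K) ≠ 0 :=
        MvPolynomial.X_ne_zero 0
      have hHPne : HP ≠ 0 := Finset.prod_ne_zero_iff.mpr hHPfac
      exact (mul_ne_zero hf (mul_ne_zero hXne hHPne)) hzero
    obtain ⟨σ, hσ⟩ := exists_integral_eval_ne_zero F hF0
    -- the point
    set A : Fin (m + 2) → 𝓞 K := fun i =>
      if i = 1 then σ 1 * (∏ d ∈ Daff, (w d 0 * σ 0 - w d 1)) + γ else σ i with hAdef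
    set a : Fin (m + 2) → K := fun i => φ (A i) with hadef
    set q : Fin (m + 2 + 1) → K := Fin.cons 1 a with hqdef
    have hq : q ≠ 0 := by
      intro h
      have := congrFun h 0
      rw [hqdef, Fin.cons_zero] at this
      exact one_ne_zero this
    have hvec2 : (Fin.cons 1 (fun i => if i = 1 then
        φ (σ 1) * (∏ d ∈ Daff, (φ (w d 0) * φ (σ 0) - φ (w d 1))) + φ γ else φ (σ i))
          : Fin (m + 2 + 1) → K) = q := by
      rw [hqdef]
      funext i
      refine Fin.cases ?_ ?_ i
      · rfl
      · intro j
        rw [Fin.cons_succ, Fin.cons_succ]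
        simp only [hadef, hAdef]
        split_ifs with hj
        · simp only [map_add, map_mul, map_prod, map_sub]
        · rfl
    have heval : MvPolynomial.eval q f ≠ 0 := by
      intro h
      apply hσ
      rw [evalF (fun i => φ (σ i)), hvec2, h]
    set Q : Projectivization K (Fin (m + 2 + 1) → K) := Projectivization.mk K q hq with hQdef
    -- key algebraic fact: cross terms with w d cannot all vanish
    have hq0 : q 0 = 1 := by rw [hqdef, Fin.cons_zero]
    have hq1 : q 1 = φ (A 0) := by rw [hqdef, ← hs0, Fin.cons_succ, hadef]
    have hq2 : q 2 = φ (A 1) := by rw [hqdef, ← hs1, Fin.cons_succ, hadef]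
    have hA0 : A 0 = σ 0 := if_neg h01
    have hA1 : A 1 = σ 1 * (∏ d' ∈ Daff, (w d' 0 * σ 0 - w d' 1)) + γ := if_pos rfl
    have hident : ∀ d ∈ Daff, w d 2 - w d 0 * γ
        = (w d 2 - w d 0 * A 1)
          - (w d 0 * σ 1 * ∏ d' ∈ Daff.erase d, (w d' 0 * σ 0 - w d' 1))
            * (w d 1 - w d 0 * A 0) := by
      intro d hd
      have hGsplit : (∏ d' ∈ Daff, (w d' 0 * σ 0 - w d' 1))
          = (w d 0 * σ 0 - w d 1) * ∏ d' ∈ Daff.erase d, (w d' 0 * σ 0 - w d' 1) :=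
        (Finset.mul_prod_erase Daff _ hd).symm
      rw [hA0, hA1, hGsplit]
      ring
    have hkey : ∀ d : {x // x ∈ N},
        ¬ (∀ i j : Fin (m + 2 + 1), φ (w d i) * q j - φ (w d j) * q i = 0) := by
      intro d hall
      by_cases hd : d ∈ Daff
      · have hx1 : w d 1 - w d 0 * A 0 = 0 := by
          apply hφinj
          rw [map_sub, map_mul, map_zero]
          have := hall 1 0
          rwa [hq0, hq1, mul_one] at this
        have hx2 : w d 2 - w d 0 * A 1 = 0 := by
          apply hφinj
          rw [map_sub, map_mul, map_zero]
          have := hall 2 0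
          rwa [hq0, hq2, mul_one] at this
        have : (w d 2 - w d 0 * γ) = 0 := by
          rw [hident d hd, hx1, hx2]
          ring
        exact hγ d hd this
      · have hd0 : w d 0 = 0 := by
          by_contra h
          exact hd (Finset.mem_filter.mpr ⟨Finset.mem_attach _ _, h⟩)
        have := hall (jnz d) 0
        rw [hq0, mul_one, hd0, map_zero, zero_mul, sub_zero] at this
        exact hjnz d (hφinj (by rw [this, map_zero]))
    have hQN : Q ∉ N := by
      intro hQN
      set d : {x // x ∈ N} := ⟨Q, hQN⟩ with hddef
      have hmk : Projectivization.mk K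
          (d : Projectivization K (Fin (m + 2 + 1) → K)).rep (Projectivization.rep_nonzero _)
          = Projectivization.mk K q hq := by
        rw [Projectivization.mk_rep]
      obtain ⟨u, hu⟩ := (Projectivization.mk_eq_mk_iff K _ _ _ hq).mp hmk
      refine hkey d fun i j => ?_
      have hwi : φ (w d i) = φ (b d) * ((u : K) * q i) := by
        rw [hw d i, ← hu]
        simp [Units.smul_def]
      have hwj : φ (w d j) = φ (b d) * ((u : K) * q j) := by
        rw [hw d j, ← hu]
        simp [Units.smul_def]
      rw [hwi, hwj]
      ring
    obtain ⟨u, hu⟩ := (Projectivization.mk_eq_mk_iff K _ _ _ hq).mp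
      ((Projectivization.mk_rep Q).trans hQdef)
    have hQrep : Q.rep = (u : K) • q := by
      rw [← hu]
      funext i
      simp [Units.smul_def]
    refine ⟨Q, a, hq, rfl, hQN, ?_, ?_⟩
    · intro v hvS
      cases v with
      | inr vw => exact absurd (hS vw) hvS
      | inl vf =>
        have hcv : c (Sum.inl vf) = ∑ d ∈ N.attach, max 0
            (Real.log (projNorm (n := m + 2) (Sum.inl vf) (fun i => φ (w d i)))
              - Real.log (finAbs vf (φ (ρ d)))) := by
          simp only [hcdef, Sum.elim_inl]
        have hcv0 : 0 ≤ c (Sum.inl vf) := by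
          rw [hcv]
          exact Finset.sum_nonneg fun d _ => hterm_nonneg vf d
        have h1exp : (1:ℝ) ≤ Real.exp (c (Sum.inl vf)) := by
          calc (1:ℝ) = Real.exp 0 := Real.exp_zero.symm
          _ ≤ _ := Real.exp_le_exp.mpr hcv0
        constructor
        · refine max_le h1exp (le_trans (ciSup_le fun i => ?_) h1exp)
          exact finAbs_le_one vf (A i)
        · intro dd hdd
          set d : {x // x ∈ N} := ⟨dd, hdd⟩ with hddef
          have hrepd : (fun i => φ (w d i)) = (φ (b d)) • (dd.rep) := by
            funext i
            rw [hw d i]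
            rfl
          set Nw := projNorm (n := m + 2) (Sum.inl vf) (fun i => φ (w d i)) with hNw
          set Dq := projDelta (n := m + 2) (Sum.inl vf) (fun i => φ (w d i)) q with hDq
          set B := finAbs vf (φ (b d)) with hB
          set U := finAbs vf ((u : K)) with hU
          set r := finAbs vf (φ (ρ d)) with hr
          have hBpos : 0 < B := finAbs_pos vf (hφb d)
          have hUpos : 0 < U := finAbs_pos vf (Units.ne_zero u)
          have hrpos : 0 < r := by
            refine finAbs_pos vf ?_
            intro h
            exact hρ d (hφinj (by rw [h, map_zero]))
          have hNwpos : 0 < Nw := by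
            refine projNorm_pos vf (jnz d) ?_
            intro h
            exact hjnz d (hφinj (by rw [h, map_zero]))
          have hNwle : Nw ≤ 1 := projNorm_le_one vf fun i => finAbs_le_one vf (w d i)
          have hNq : projNorm (Sum.inl vf) q = 1 := by
            rw [hqdef]
            exact projNorm_cons_one vf (fun i => finAbs_le_one vf (A i))
          -- lower bound for the delta term
          have hE1le : finAbs vf (φ (w d 1 - w d 0 * A 0)) ≤ Dq := by
            have h := le_projDelta vf (fun i => φ (w d i)) q ((1 : Fin (m + 2 + 1)), 0)
            simp only at h
            rwa [hq0, hq1, mul_one, ← map_mul, ← map_sub] at h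
          have hE2le : finAbs vf (φ (w d 2 - w d 0 * A 1)) ≤ Dq := by
            have h := le_projDelta vf (fun i => φ (w d i)) q ((2 : Fin (m + 2 + 1)), 0)
            simp only at h
            rwa [hq0, hq2, mul_one, ← map_mul, ← map_sub] at h
          have hDq_ge : r ≤ Dq := by
            by_cases hd : d ∈ Daff
            · have hρd : φ (ρ d) = φ (w d 2 - w d 0 * A 1)
                  - φ (w d 0 * σ 1 * ∏ d' ∈ Daff.erase d, (w d' 0 * σ 0 - w d' 1))
                    * φ (w d 1 - w d 0 * A 0) := by
                rw [← map_mul, ← map_sub]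
                congr 1
                rw [hρdef]
                simp only [if_pos hd]
                exact hident d hd
              have hle1 : finAbs vf (φ (w d 0 * σ 1 * ∏ d' ∈ Daff.erase d,
                  (w d' 0 * σ 0 - w d' 1)) * φ (w d 1 - w d 0 * A 0))
                  ≤ finAbs vf (φ (w d 1 - w d 0 * A 0)) := by
                rw [finAbs_mul]
                exact mul_le_of_le_one_left (finAbs_nonneg vf _) (finAbs_le_one vf _)
              calc r = finAbs vf (φ (ρ d)) := hr
              _ ≤ max (finAbs vf (φ (w d 2 - w d 0 * A 1)))
                  (finAbs vf (φ (w d 0 * σ 1 * ∏ d' ∈ Daff.erase d,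
                    (w d' 0 * σ 0 - w d' 1)) * φ (w d 1 - w d 0 * A 0))) := by
                rw [hρd]
                exact finAbs_sub_le_max vf _ _
              _ ≤ Dq := max_le hE2le (le_trans hle1 hE1le)
            · have hd0 : w d 0 = 0 := by
                by_contra h
                exact hd (Finset.mem_filter.mpr ⟨Finset.mem_attach _ _, h⟩)
              have h := le_projDelta vf (fun i => φ (w d i)) q ((jnz d), 0)
              simp only at h
              rw [hq0, mul_one, hd0, map_zero, zero_mul, sub_zero] at h
              have hρd : ρ d = w d (jnz d) := by rw [hρdef]; simp only [if_neg hd]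
              rw [hr, hρd]
              exact h
          have hDqpos : 0 < Dq := lt_of_lt_of_le hrpos hDq_ge
          -- norm relations
          have h1 : Nw = B * projNorm (Sum.inl vf) dd.rep := by
            rw [hNw, hrepd, projNorm_smul, hB]
          have h2 : projNorm (Sum.inl vf) Q.rep = U := by
            rw [hQrep, projNorm_smul, hNq, mul_one, hU]
          have h34 : U * Dq = B * projDelta (Sum.inl vf) dd.rep Q.rep := by
            rw [← projDelta_smul_right (n := m + 2) vf ((u : K)) (fun i => φ (w d i)) q,
              ← hQrep, hrepd, projDelta_smul_left, hB]
          have h5 : projDelta (Sum.inl vf) dd.rep Q.rep = U * Dq / B := by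
            rw [h34]
            field_simp
          have h6 : projNorm (Sum.inl vf) dd.rep = Nw / B := by
            rw [h1]
            field_simp
          have hweil : weil (Sum.inl vf) dd Q = Real.log (Nw / Dq) := by
            unfold weil
            rw [h6, h2, h5]
            congr 1
            field_simp
          rw [hweil, hcv]
          have hlog : Real.log (Nw / Dq) ≤ Real.log Nw - Real.log r := by
            have hdiv : Nw / Dq ≤ Nw / r :=
              div_le_div_of_nonneg_left hNwpos.le hrpos hDq_ge
            calc Real.log (Nw / Dq) ≤ Real.log (Nw / r) :=
              Real.log_le_log (div_pos hNwpos hDqpos) hdiv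
            _ = _ := Real.log_div hNwpos.ne' hrpos.ne'
          refine le_trans (le_trans hlog (le_max_right 0 _)) ?_
          exact Finset.single_le_sum (fun d' _ => hterm_nonneg vf d') (Finset.mem_attach _ d)
    · rw [hQrep, eval_smul_of_isHomogeneous f hfe]
      exact mul_ne_zero (pow_ne_zero e (Units.ne_zero u)) heval
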